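/- Let (S_n)_{n≥0} be a square integrable martingale with S_0 = 0, let ⟨S⟩_n = Σ_{i=1}^n E[(S_i - S_{i-1})² | F_{i-1}] and [S]_n = Σ_{i=1}^n (S_i - S_{i-1})². Then for all x, y > 0, a ≥ 0, b > 0: P(|S_n|/(a + b⟨S⟩_n) ≥ x and ⟨S⟩_n ≥ [S]_n + y) ≤ 2·exp(-x²(ab + b²y/2)). -/

import Mathlib

open MeasureTheory Finset

lemma exp_quad_le (u : ℝ) : Real.exp (u - u^2/2) ≤ 1 + u + u^2/2 := by
  have hB : (0:ℝ) < 1 + (u^2/2 - u) := by nlinarith [sq_nonneg (u-1)]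
  have h2 : 1 + (u^2/2 - u) ≤ Real.exp (u^2/2 - u) := by
    have := Real.add_one_le_exp (u^2/2 - u); linarith
  have h3 : Real.exp (u - u^2/2) * Real.exp (u^2/2 - u) = 1 := by
    rw [← Real.exp_add]; ring_nf; exact Real.exp_zero
  have hA : 0 < Real.exp (u - u^2/2) := Real.exp_pos _
  have h4 : Real.exp (u - u^2/2) * (1 + (u^2/2 - u)) ≤ 1 := by
    calc Real.exp (u - u^2/2) * (1 + (u^2/2 - u))
        ≤ Real.exp (u - u^2/2) * Real.exp (u^2/2 - u) :=
          mul_le_mul_of_nonneg_left h2 hA.le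
      _ = 1 := h3
  nlinarith [sq_nonneg (u^2)]

lemma quad_half (u : ℝ) : u - u^2/2 ≤ 1/2 := by nlinarith [sq_nonneg (u-1)]

section BT
variable {Ω : Type*} {m : MeasurableSpace Ω} {μ : Measure Ω} [IsProbabilityMeasure μ]
  {F : Filtration ℕ m} {S : ℕ → Ω → ℝ}

/-- exponent of the exponential supermartingale -/
noncomputable def btExpo (μ : Measure Ω) (F : Filtration ℕ m) (S : ℕ → Ω → ℝ) (t : ℝ)
    (n : ℕ) (ω : Ω) : ℝ :=
  ∑ i ∈ range n, (t * (S (i + 1) ω - S i ω) - t^2/2 * (S (i + 1) ω - S i ω)^2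
      - t^2/2 * (μ[fun ω' => (S (i + 1) ω' - S i ω') ^ 2 | F i]) ω)

lemma bt_sm_expo (hmart : Martingale S F μ) (t : ℝ) (n : ℕ) :
    StronglyMeasurable[F n] (btExpo μ F S t n) := by
  apply Finset.stronglyMeasurable_fun_sum (range n)
  intro i hi
  have hi' : i + 1 ≤ n := mem_range.mp hi
  have hS1 : StronglyMeasurable[F n] (S (i+1)) :=
    (hmart.stronglyMeasurable (i+1)).mono (F.mono hi')
  have hS0 : StronglyMeasurable[F n] (S i) :=
    (hmart.stronglyMeasurable i).mono (F.mono (le_of_lt (mem_range.mp hi)))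
  have hg : StronglyMeasurable[F n]
      (μ[fun ω' => (S (i + 1) ω' - S i ω') ^ 2 | F i]) :=
    stronglyMeasurable_condExp.mono (F.mono (le_of_lt (mem_range.mp hi)))
  have hΔ : StronglyMeasurable[F n] (fun ω => S (i+1) ω - S i ω) := hS1.sub hS0
  exact ((hΔ.const_mul t).sub ((hΔ.pow 2).const_mul (t^2/2))).sub (hg.const_mul (t^2/2))

lemma bt_expo_le (hmart : Martingale S F μ) (t : ℝ) (n : ℕ) :
    ∀ᵐ ω ∂μ, btExpo μ F S t n ω ≤ n / 2 := by
  have hg : ∀ᵐ ω ∂μ, ∀ i : ℕ,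
      0 ≤ (μ[fun ω' => (S (i + 1) ω' - S i ω') ^ 2 | F i]) ω := by
    rw [ae_all_iff]
    intro i
    exact condExp_nonneg (Filter.Eventually.of_forall fun ω' => sq_nonneg _)
  filter_upwards [hg] with ω hω
  have : ∀ i ∈ range n,
      t * (S (i + 1) ω - S i ω) - t^2/2 * (S (i + 1) ω - S i ω)^2
        - t^2/2 * (μ[fun ω' => (S (i + 1) ω' - S i ω') ^ 2 | F i]) ω ≤ 1/2 := by
    intro i _
    have h1 := quad_half (t * (S (i + 1) ω - S i ω))
    have h2 := hω i
    nlinarith [sq_nonneg t]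
  calc btExpo μ F S t n ω ≤ ∑ _i ∈ range n, (1:ℝ)/2 := Finset.sum_le_sum this
    _ = n / 2 := by simp [Finset.sum_const]; ring

lemma bt_int (hmart : Martingale S F μ) (t : ℝ) (n : ℕ) :
    Integrable (fun ω => Real.exp (btExpo μ F S t n ω)) μ := by
  refine Integrable.mono' (integrable_const (Real.exp (n/2))) ?_ ?_
  · exact (Real.continuous_exp.comp_stronglyMeasurable
      ((bt_sm_expo hmart t n).mono (F.le n))).aestronglyMeasurable
  · filter_upwards [bt_expo_le hmart t n] with ω hω
    rw [Real.norm_eq_abs, abs_of_pos (Real.exp_pos _)]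
    exact Real.exp_le_exp.mpr hω

lemma bt_supermart (hmart : Martingale S F μ) (hL2 : ∀ n, MemLp (S n) 2 μ) (t : ℝ) :
    ∀ n : ℕ, ∫ ω, Real.exp (btExpo μ F S t n ω) ∂μ ≤ 1 := by
  intro n
  induction n with
  | zero => simp [btExpo]
  | succ n ih =>
    set g : Ω → ℝ := μ[fun ω' => (S (n + 1) ω' - S n ω') ^ 2 | F n] with hgdef
    set Δ : Ω → ℝ := fun ω => S (n + 1) ω - S n ω with hΔdef
    set f : Ω → ℝ := fun ω => Real.exp (btExpo μ F S t n ω - t^2/2 * g ω) with hfdef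
    set W : Ω → ℝ := fun ω => Real.exp (t * Δ ω - t^2/2 * (Δ ω)^2) with hWdef
    have hsplit : ∀ ω, Real.exp (btExpo μ F S t (n+1) ω) = f ω * W ω := by
      intro ω
      rw [hfdef, hWdef, ← Real.exp_add]
      congr 1
      simp only [btExpo, Finset.sum_range_succ]
      ring
    -- measurability of f wrt F n
    have hf_sm : StronglyMeasurable[F n] f := by
      have h1 := bt_sm_expo hmart t n
      have h2 : StronglyMeasurable[F n] g := stronglyMeasurable_condExp
      exact Real.continuous_exp.comp_stronglyMeasurable (h1.sub (h2.const_mul _))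
    -- integrability
    have hΔ_mem : MemLp Δ 2 μ := (hL2 (n+1)).sub (hL2 n)
    have hΔ_int : Integrable Δ μ := hΔ_mem.integrable one_le_two
    have hΔsq_int : Integrable (fun ω => (Δ ω)^2) μ := hΔ_mem.integrable_sq
    have hW_int : Integrable W μ := by
      refine Integrable.mono' (integrable_const (Real.exp (1/2))) ?_ ?_
      · have hΔm := hΔ_mem.aestronglyMeasurable
        exact Real.continuous_exp.comp_aestronglyMeasurable
          ((hΔm.const_mul t).sub ((hΔm.pow 2).const_mul (t^2/2)))
      · refine Filter.Eventually.of_forall fun ω => ?_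
        rw [Real.norm_eq_abs, abs_of_pos (Real.exp_pos _)]
        apply Real.exp_le_exp.mpr
        have := quad_half (t * Δ ω)
        nlinarith
    have hfW_int : Integrable (f * W) μ := by
      have := bt_int hmart t (n+1)
      refine this.congr (Filter.Eventually.of_forall fun ω => ?_)
      exact (hsplit ω)
    have hZ_int : Integrable (fun ω => Real.exp (btExpo μ F S t n ω)) μ :=
      bt_int hmart t n
    -- polynomial bound function
    set P : Ω → ℝ := fun ω => 1 + t * Δ ω + t^2/2 * (Δ ω)^2 with hPdef
    have hP_int : Integrable P μ := by
      apply Integrable.add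
      apply Integrable.add (integrable_const 1) (hΔ_int.const_mul t)
      exact hΔsq_int.const_mul _
    have hWP : W ≤ᵐ[μ] P := by
      refine Filter.Eventually.of_forall fun ω => ?_
      have := exp_quad_le (t * Δ ω)
      simp only [hWdef, hPdef]
      have heq : t * Δ ω - t^2/2 * (Δ ω)^2 = t * Δ ω - (t * Δ ω)^2/2 := by ring
      rw [heq]
      calc Real.exp (t * Δ ω - (t * Δ ω)^2/2) ≤ 1 + t * Δ ω + (t * Δ ω)^2/2 := this
        _ = 1 + t * Δ ω + t^2/2 * (Δ ω)^2 := by ring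
    -- condExp of Δ is 0
    have hΔ_ce : μ[Δ | F n] =ᵐ[μ] 0 := by
      have h1 : μ[Δ | F n] =ᵐ[μ] μ[S (n+1) | F n] - μ[S n | F n] :=
        condExp_sub ((hL2 (n+1)).integrable one_le_two) ((hL2 n).integrable one_le_two) (F n)
      have h2 : μ[S (n+1) | F n] =ᵐ[μ] S n := hmart.condExp_ae_eq (Nat.le_succ n)
      have h3 : μ[S n | F n] =ᵐ[μ] S n := hmart.condExp_ae_eq (le_refl n)
      filter_upwards [h1, h2, h3] with ω e1 e2 e3
      simp only [Pi.sub_apply, Pi.zero_apply] at *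
      rw [e1, e2, e3]; ring
    -- condExp of P
    have hP_ce : μ[P | F n] =ᵐ[μ] fun ω => 1 + t^2/2 * g ω := by
      have h1 : μ[P | F n] =ᵐ[μ]
          μ[fun _ => (1:ℝ) | F n] + μ[fun ω => t * Δ ω + t^2/2 * (Δ ω)^2 | F n] := by
        have := condExp_add (μ := μ) (m := F n) (integrable_const (1:ℝ))
          ((hΔ_int.const_mul t).add (hΔsq_int.const_mul (t^2/2)))
        refine Filter.EventuallyEq.trans ?_ this
        apply condExp_congr_ae
        refine Filter.Eventually.of_forall fun ω => ?_
        simp [hPdef]; ring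
      have h2 : μ[fun ω => t * Δ ω + t^2/2 * (Δ ω)^2 | F n] =ᵐ[μ]
          μ[fun ω => t * Δ ω | F n] + μ[fun ω => t^2/2 * (Δ ω)^2 | F n] :=
        condExp_add (hΔ_int.const_mul t) (hΔsq_int.const_mul _) (F n)
      have h3 : μ[fun ω => t * Δ ω | F n] =ᵐ[μ] fun _ => (0:ℝ) := by
        have hs : μ[fun ω => t * Δ ω | F n] =ᵐ[μ] t • μ[Δ | F n] := by
          have := condExp_smul (μ := μ) (m := F n) (t : ℝ) Δ
          refine Filter.EventuallyEq.trans ?_ this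
          apply condExp_congr_ae
          exact Filter.Eventually.of_forall fun ω => by simp
        filter_upwards [hs, hΔ_ce] with ω e1 e2
        simp only [Pi.smul_apply, smul_eq_mul] at e1
        rw [e1]; simp only [Pi.zero_apply] at e2; rw [e2]; ring
      have h4 : μ[fun ω => t^2/2 * (Δ ω)^2 | F n] =ᵐ[μ]
          fun ω => t^2/2 * g ω := by
        have hs : μ[fun ω => t^2/2 * (Δ ω)^2 | F n] =ᵐ[μ]
            (t^2/2) • μ[fun ω => (Δ ω)^2 | F n] := by
          have := condExp_smul (μ := μ) (m := F n) (t^2/2 : ℝ) (fun ω => (Δ ω)^2)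
          refine Filter.EventuallyEq.trans ?_ this
          apply condExp_congr_ae
          exact Filter.Eventually.of_forall fun ω => by simp
        refine hs.trans ?_
        refine Filter.Eventually.of_forall fun ω => ?_
        simp only [Pi.smul_apply, smul_eq_mul]
        rfl
      have h5 : μ[fun _ => (1:ℝ) | F n] = fun _ => (1:ℝ) :=
        condExp_const (F.le n) (1:ℝ) (μ := μ)
      filter_upwards [h1, h2, h3, h4] with ω e1 e2 e3 e4
      simp only [Pi.add_apply] at *
      rw [e1, e2, e3, e4, h5]; ring
    -- main chain
    have key : μ[f * W | F n] ≤ᵐ[μ] fun ω => Real.exp (btExpo μ F S t n ω) := by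
      have hmul : μ[f * W | F n] =ᵐ[μ] f * μ[W | F n] :=
        condExp_mul_of_stronglyMeasurable_left hf_sm hfW_int hW_int
      have hmono : μ[W | F n] ≤ᵐ[μ] μ[P | F n] := condExp_mono hW_int hP_int hWP
      have hg_nn : ∀ᵐ ω ∂μ, 0 ≤ g ω :=
        condExp_nonneg (Filter.Eventually.of_forall fun ω' => sq_nonneg _)
      filter_upwards [hmul, hmono, hP_ce, hg_nn] with ω e1 e2 e3 e4
      rw [e1]
      simp only [Pi.mul_apply]
      have hf_nn : 0 ≤ f ω := (Real.exp_pos _).le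
      calc f ω * (μ[W | F n]) ω ≤ f ω * (μ[P | F n]) ω :=
            mul_le_mul_of_nonneg_left e2 hf_nn
        _ = f ω * (1 + t^2/2 * g ω) := by rw [e3]
        _ ≤ f ω * Real.exp (t^2/2 * g ω) := by
            apply mul_le_mul_of_nonneg_left _ hf_nn
            have := Real.add_one_le_exp (t^2/2 * g ω); linarith
        _ = Real.exp (btExpo μ F S t n ω) := by
            rw [hfdef]; simp only; rw [← Real.exp_add]; ring_nf
    calc ∫ ω, Real.exp (btExpo μ F S t (n+1) ω) ∂μ
        = ∫ ω, (f * W) ω ∂μ := by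
          apply integral_congr_ae
          exact Filter.Eventually.of_forall fun ω => hsplit ω
      _ = ∫ ω, (μ[f * W | F n]) ω ∂μ := (integral_condExp (F.le n)).symm
      _ ≤ ∫ ω, Real.exp (btExpo μ F S t n ω) ∂μ :=
          integral_mono_ae integrable_condExp hZ_int key
      _ ≤ 1 := ih

lemma bt_markov {A : Set Ω} {Z : Ω → ℝ} (hZint : Integrable Z μ) (hZ0 : 0 ≤ᵐ[μ] Z)
    (hZ1 : ∫ ω, Z ω ∂μ ≤ 1) {r : ℝ} (hA : ∀ᵐ ω ∂μ, ω ∈ A → Real.exp r ≤ Z ω) :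
    μ A ≤ ENNReal.ofReal (Real.exp (-r)) := by
  have hsub : μ A ≤ μ {ω | Real.exp r ≤ Z ω} := by
    apply measure_mono_ae
    filter_upwards [hA] with ω h hω
    exact h hω
  have hm := mul_meas_ge_le_integral_of_nonneg hZ0 hZint (Real.exp r)
  have hfin : μ {ω | Real.exp r ≤ Z ω} ≠ ⊤ := measure_ne_top μ _
  have hep : (0:ℝ) < Real.exp r := Real.exp_pos r
  have h1 : (μ {ω | Real.exp r ≤ Z ω}).toReal ≤ Real.exp (-r) := by
    rw [Real.exp_neg, ← one_div]
    rw [le_div_iff₀ hep]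
    calc (μ {ω | Real.exp r ≤ Z ω}).toReal * Real.exp r
        = Real.exp r * (μ {ω | Real.exp r ≤ Z ω}).toReal := by ring
      _ ≤ ∫ ω, Z ω ∂μ := hm
      _ ≤ 1 := hZ1
  calc μ A ≤ μ {ω | Real.exp r ≤ Z ω} := hsub
    _ = ENNReal.ofReal (μ {ω | Real.exp r ≤ Z ω}).toReal := (ENNReal.ofReal_toReal hfin).symm
    _ ≤ ENNReal.ofReal (Real.exp (-r)) := ENNReal.ofReal_le_ofReal h1


end BT

set_option maxHeartbeats 1000000 in
theorem bercu_touati_self_normalized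
    {Ω : Type*} {m : MeasurableSpace Ω} {μ : Measure Ω} [IsProbabilityMeasure μ]
    (F : Filtration ℕ m) (S : ℕ → Ω → ℝ)
    (hmart : Martingale S F μ)
    (hL2 : ∀ n, MemLp (S n) 2 μ)
    (h0 : S 0 = 0)
    (n : ℕ) (x y a b : ℝ) (hx : 0 < x) (hy : 0 < y) (ha : 0 ≤ a) (hb : 0 < b) :
    μ {ω | x ≤ |S n ω| /
          (a + b * ∑ i ∈ range n, (μ[fun ω' => (S (i + 1) ω' - S i ω') ^ 2 | F i]) ω) ∧
        ∑ i ∈ range n, (S (i + 1) ω - S i ω) ^ 2 + y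
          ≤ ∑ i ∈ range n, (μ[fun ω' => (S (i + 1) ω' - S i ω') ^ 2 | F i]) ω}
      ≤ ENNReal.ofReal (2 * Real.exp (-x ^ 2 * (a * b + b ^ 2 * y / 2))) := by
  set V : Ω → ℝ := fun ω => ∑ i ∈ range n, (μ[fun ω' => (S (i + 1) ω' - S i ω') ^ 2 | F i]) ω
    with hVdef
  set Q : Ω → ℝ := fun ω => ∑ i ∈ range n, (S (i + 1) ω - S i ω) ^ 2 with hQdef
  -- expo formula
  have hexpo : ∀ (t' : ℝ) (ω : Ω),
      btExpo μ F S t' n ω = t' * S n ω - t'^2/2 * Q ω - t'^2/2 * V ω := by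
    intro t' ω
    have htel : ∑ i ∈ range n, (S (i + 1) ω - S i ω) = S n ω := by
      rw [Finset.sum_range_sub (fun i => S i ω)]
      rw [show S 0 ω = 0 from congrFun h0 ω]
      ring
    simp only [btExpo, Finset.sum_sub_distrib, ← Finset.mul_sum]
    rw [← Finset.sum_sub_distrib, htel]
  -- V nonneg a.e.
  have hV0 : ∀ᵐ ω ∂μ, 0 ≤ V ω := by
    have hg : ∀ᵐ ω ∂μ, ∀ i : ℕ,
        0 ≤ (μ[fun ω' => (S (i + 1) ω' - S i ω') ^ 2 | F i]) ω := by
      rw [ae_all_iff]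
      intro i
      exact condExp_nonneg (Filter.Eventually.of_forall fun ω' => sq_nonneg _)
    filter_upwards [hg] with ω hω
    exact Finset.sum_nonneg fun i _ => hω i
  set E : Set Ω := {ω | x ≤ |S n ω| / (a + b * V ω) ∧ Q ω + y ≤ V ω} with hEdef
  -- key pointwise estimate
  have hkey : ∀ ω, 0 ≤ V ω → ω ∈ E →
      x ^ 2 * (a * b + b ^ 2 * y / 2)
        ≤ (x*b) * |S n ω| - (x*b)^2/2 * Q ω - (x*b)^2/2 * V ω := by
    intro ω hV hω
    obtain ⟨hxle, hQV⟩ := hω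
    have hd : 0 ≤ a + b * V ω := by positivity
    rcases eq_or_lt_of_le hd with hd0 | hd0
    · exfalso
      rw [← hd0, div_zero] at hxle
      linarith
    · have hxd : x * (a + b * V ω) ≤ |S n ω| := by
        rw [← le_div_iff₀ hd0]; exact hxle
      have hQle : Q ω ≤ V ω - y := by linarith
      have ht2 : (0:ℝ) ≤ (x*b)^2/2 := by positivity
      have h1 : (x*b) * (x * (a + b * V ω)) ≤ (x*b) * |S n ω| :=
        mul_le_mul_of_nonneg_left hxd (by positivity)
      nlinarith [mul_le_mul_of_nonneg_left hQle ht2]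
  have hEsub : E ⊆ (E ∩ {ω | 0 ≤ S n ω}) ∪ (E ∩ {ω | S n ω ≤ 0}) := by
    intro ω hω
    rcases le_total 0 (S n ω) with h | h
    · exact Or.inl ⟨hω, h⟩
    · exact Or.inr ⟨hω, h⟩
  set r : ℝ := x ^ 2 * (a * b + b ^ 2 * y / 2) with hrdef
  have hplus : μ (E ∩ {ω | 0 ≤ S n ω}) ≤ ENNReal.ofReal (Real.exp (-r)) := by
    refine bt_markov (bt_int hmart (x*b) n)
      (Filter.Eventually.of_forall fun ω => (Real.exp_pos _).le)
      (bt_supermart hmart hL2 (x*b) n) ?_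
    filter_upwards [hV0] with ω hV hω
    obtain ⟨hE, hS⟩ := hω
    apply Real.exp_le_exp.mpr
    rw [hexpo (x*b) ω]
    have := hkey ω hV hE
    rw [abs_of_nonneg hS] at this
    linarith
  have hminus : μ (E ∩ {ω | S n ω ≤ 0}) ≤ ENNReal.ofReal (Real.exp (-r)) := by
    refine bt_markov (bt_int hmart (-(x*b)) n)
      (Filter.Eventually.of_forall fun ω => (Real.exp_pos _).le)
      (bt_supermart hmart hL2 (-(x*b)) n) ?_
    filter_upwards [hV0] with ω hV hω
    obtain ⟨hE, hS⟩ := hω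
    apply Real.exp_le_exp.mpr
    rw [hexpo (-(x*b)) ω]
    have := hkey ω hV hE
    rw [abs_of_nonpos hS] at this
    have hsq : (-(x*b))^2 = (x*b)^2 := by ring
    rw [hsq]
    linarith
  calc μ E ≤ μ ((E ∩ {ω | 0 ≤ S n ω}) ∪ (E ∩ {ω | S n ω ≤ 0})) := measure_mono hEsub
    _ ≤ μ (E ∩ {ω | 0 ≤ S n ω}) + μ (E ∩ {ω | S n ω ≤ 0}) := measure_union_le _ _
    _ ≤ ENNReal.ofReal (Real.exp (-r)) + ENNReal.ofReal (Real.exp (-r)) :=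
        add_le_add hplus hminus
    _ = ENNReal.ofReal (2 * Real.exp (-x ^ 2 * (a * b + b ^ 2 * y / 2))) := by
        rw [← ENNReal.ofReal_add (Real.exp_pos _).le (Real.exp_pos _).le]
        congr 1
        rw [show -x ^ 2 * (a * b + b ^ 2 * y / 2) = -r by rw [hrdef]; ring]
        ring
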